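/- Let {I(l)}_{l=0}^T be adapted to a finite filtration, let P¹(l) > 0 be adapted, and let (ρ⁰(l), ρ¹(l)) be martingales with ρ⁰(l) > 0 and (1-λ₁) P¹(l) ≤ ρ¹(l)/ρ⁰(l) ≤ (1+λ₀) P¹(l) for all l. Then E[ -Σ_{l=0}^T h(I(l)) P¹(l) ρ⁰(T) + Σ_{l=0}^T I(l) ρ¹(T) ] ≤ 0, where h(z) = (1+λ₀)z for z > 0 and (1-λ₁)z for z ≤ 0. -/

import Mathlib

open MeasureTheory

lemma key_mart {Ω : Type*} [Fintype Ω] {m : MeasurableSpace Ω} [MeasurableSingletonClass Ω]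
    (P : Measure Ω) [IsProbabilityMeasure P] (ℱ : Filtration ℕ m)
    {ρ : ℕ → Ω → ℝ} (hρ : Martingale ρ ℱ P) {l T : ℕ} (hl : l ≤ T)
    {g : Ω → ℝ} (hg : StronglyMeasurable[ℱ l] g) :
    ∫ ω, g ω * ρ T ω ∂P = ∫ ω, g ω * ρ l ω ∂P := by
  have h1 : ∫ ω, (P[(fun ω => g ω * ρ T ω) | ℱ l]) ω ∂P = ∫ ω, g ω * ρ T ω ∂P :=
    integral_condExp (ℱ.le l)
  have h2 : P[(g * ρ T) | ℱ l] =ᵐ[P] g * P[ρ T | ℱ l] :=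
    condExp_mul_of_stronglyMeasurable_left hg (Integrable.of_finite) (Integrable.of_finite)
  have h3 : P[ρ T | ℱ l] =ᵐ[P] ρ l := hρ.condExp_ae_eq hl
  have h4 : P[(g * ρ T) | ℱ l] =ᵐ[P] fun ω => g ω * ρ l ω := by
    filter_upwards [h2, h3] with ω h2ω h3ω
    simp only [Pi.mul_apply] at *
    rw [h2ω, h3ω]
  rw [← h1]
  exact integral_congr_ae h4

theorem stmt9 {Ω : Type*} [Fintype Ω] {m : MeasurableSpace Ω} [MeasurableSingletonClass Ω]
    (P : Measure Ω) [IsProbabilityMeasure P]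
    (ℱ : Filtration ℕ m) (T : ℕ)
    (lam0 lam1 : ℝ) (hlam0 : 0 < lam0) (hlam1 : 0 < lam1)
    (h : ℝ → ℝ) (hh : ∀ z : ℝ, h z = if 0 < z then (1 + lam0) * z else (1 - lam1) * z)
    (I P1 : ℕ → Ω → ℝ) (hI : StronglyAdapted ℱ I) (hP1 : StronglyAdapted ℱ P1)
    (hP1pos : ∀ l ω, 0 < P1 l ω)
    (ρ0 ρ1 : ℕ → Ω → ℝ)
    (hρ0 : Martingale ρ0 ℱ P) (hρ1 : Martingale ρ1 ℱ P)
    (hρ0pos : ∀ l ω, 0 < ρ0 l ω)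
    (hratio : ∀ l ω, (1 - lam1) * P1 l ω ≤ ρ1 l ω / ρ0 l ω ∧
      ρ1 l ω / ρ0 l ω ≤ (1 + lam0) * P1 l ω) :
    ∫ ω, (- ∑ l ∈ Finset.range (T + 1), h (I l ω) * P1 l ω * ρ0 T ω
          + ∑ l ∈ Finset.range (T + 1), I l ω * ρ1 T ω) ∂P ≤ 0 := by
  -- h is Borel measurable
  have hhm : Measurable h := by
    have : h = fun z => if 0 < z then (1 + lam0) * z else (1 - lam1) * z := funext hh
    rw [this]
    exact Measurable.ite (measurableSet_lt measurable_const measurable_id)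
      (measurable_const.mul measurable_id) (measurable_const.mul measurable_id)
  have hint : ∀ (f : Ω → ℝ), Integrable f P := fun f => Integrable.of_finite
  -- rewrite integrand as a single sum
  have hre : (fun ω => - ∑ l ∈ Finset.range (T + 1), h (I l ω) * P1 l ω * ρ0 T ω
          + ∑ l ∈ Finset.range (T + 1), I l ω * ρ1 T ω)
      = fun ω => ∑ l ∈ Finset.range (T + 1),
          (-(h (I l ω) * P1 l ω) * ρ0 T ω + I l ω * ρ1 T ω) := by
    funext ω
    rw [Finset.sum_add_distrib, ← Finset.sum_neg_distrib]
    congr 1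
    · congr 1; funext l; ring
  rw [hre, integral_finset_sum _ (fun l _ => hint _)]
  apply Finset.sum_nonpos
  intro l hl
  have hlT : l ≤ T := Nat.lt_succ_iff.mp (Finset.mem_range.mp hl)
  -- split the integral
  have hsplit : ∫ ω, (-(h (I l ω) * P1 l ω) * ρ0 T ω + I l ω * ρ1 T ω) ∂P
      = (∫ ω, -(h (I l ω) * P1 l ω) * ρ0 T ω ∂P) + ∫ ω, I l ω * ρ1 T ω ∂P :=
    integral_add (hint _) (hint _)
  -- strong measurability
  have hg0 : StronglyMeasurable[ℱ l] (fun ω => -(h (I l ω) * P1 l ω)) := by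
    exact ((hhm.comp (hI l).measurable).stronglyMeasurable.mul (hP1 l)).neg
  have e0 : ∫ ω, -(h (I l ω) * P1 l ω) * ρ0 T ω ∂P
      = ∫ ω, -(h (I l ω) * P1 l ω) * ρ0 l ω ∂P := key_mart P ℱ hρ0 hlT hg0
  have e1 : ∫ ω, I l ω * ρ1 T ω ∂P = ∫ ω, I l ω * ρ1 l ω ∂P :=
    key_mart P ℱ hρ1 hlT (hI l)
  rw [hsplit, e0, e1, ← integral_add (hint _) (hint _)]
  have hpt : ∀ ω, -(h (I l ω) * P1 l ω) * ρ0 l ω + I l ω * ρ1 l ω ≤ 0 := by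
    intro ω
    have hρ0' := hρ0pos l ω
    have hR := hratio l ω
    have hρ1eq : ρ1 l ω = (ρ1 l ω / ρ0 l ω) * ρ0 l ω := by
      field_simp
    rw [hρ1eq]
    have key : I l ω * (ρ1 l ω / ρ0 l ω) ≤ h (I l ω) * P1 l ω := by
      rw [hh]
      by_cases hpos : 0 < I l ω
      · simp only [hpos, if_true]
        calc I l ω * (ρ1 l ω / ρ0 l ω) ≤ I l ω * ((1 + lam0) * P1 l ω) :=
              mul_le_mul_of_nonneg_left hR.2 hpos.le
          _ = (1 + lam0) * I l ω * P1 l ω := by ring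
      · simp only [hpos, if_false]
        push_neg at hpos
        calc I l ω * (ρ1 l ω / ρ0 l ω) ≤ I l ω * ((1 - lam1) * P1 l ω) :=
              mul_le_mul_of_nonpos_left hR.1 hpos
          _ = (1 - lam1) * I l ω * P1 l ω := by ring
    nlinarith [mul_le_mul_of_nonneg_right key hρ0'.le]
  calc ∫ ω, (-(h (I l ω) * P1 l ω) * ρ0 l ω + I l ω * ρ1 l ω) ∂P
      ≤ ∫ _ω, (0 : ℝ) ∂P := integral_mono (hint _) (hint _) hpt
    _ = 0 := by simp
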